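/- For every real q ≥ 3 and every x in [0,1], the q-Tsallis binary entropy satisfies 2·Hqᵀ(1/2)·2x(1-x) ≤ Hqᵀ(x) ≤ (q/(2(q-1)))·2x(1-x). -/

import Mathlib

open Real Set

noncomputable def tsallisBin (q x : ℝ) : ℝ := (1 - x ^ q - (1 - x) ^ q) / (q - 1)

namespace TsallisAux

noncomputable def W (q t : ℝ) : ℝ := 2 + ((2:ℝ)^q - 2) * t^2 - (1+t)^q - (1-t)^q
noncomputable def W1 (q t : ℝ) : ℝ :=
  2*((2:ℝ)^q - 2) * t - q * (1+t)^(q-1) + q * (1-t)^(q-1)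
noncomputable def W2 (q t : ℝ) : ℝ :=
  2*((2:ℝ)^q - 2) - q*(q-1) * ((1+t)^(q-2) + (1-t)^(q-2))

lemma hasDerivAt_onePlus (p t : ℝ) (hp : 1 ≤ p) :
    HasDerivAt (fun s : ℝ => (1 + s) ^ p) (p * (1 + t) ^ (p - 1)) t := by
  have h := ((hasDerivAt_id t).const_add 1).rpow_const (p := p) (Or.inr hp)
  simpa using h

lemma hasDerivAt_oneMinus (p t : ℝ) (hp : 1 ≤ p) :
    HasDerivAt (fun s : ℝ => (1 - s) ^ p) (-(p * (1 - t) ^ (p - 1))) t := by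
  have h := ((hasDerivAt_id t).const_sub 1).rpow_const (p := p) (Or.inr hp)
  exact h.congr_deriv (by simp only [id_eq]; ring)

lemma hW1 (q : ℝ) (hq : 1 ≤ q) (t : ℝ) : HasDerivAt (W q) (W1 q t) t := by
  have h1 := hasDerivAt_onePlus q t hq
  have h2 := hasDerivAt_oneMinus q t hq
  have h3 : HasDerivAt (fun s : ℝ => s^2) (2*t) t := by simpa using hasDerivAt_pow 2 t
  have h := (((h3.const_mul ((2:ℝ)^q - 2)).const_add 2).sub h1).sub h2
  exact h.congr_deriv (by unfold W1; ring)

lemma hW2 (q : ℝ) (hq : 2 ≤ q) (t : ℝ) : HasDerivAt (W1 q) (W2 q t) t := by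
  have hq1 : 1 ≤ q - 1 := by linarith
  have h1 := (hasDerivAt_onePlus (q-1) t hq1).const_mul q
  have h2 := (hasDerivAt_oneMinus (q-1) t hq1).const_mul q
  have h3 : HasDerivAt (fun s : ℝ => 2*((2:ℝ)^q - 2) * s) (2*((2:ℝ)^q - 2)) t := by
    simpa using (hasDerivAt_id t).const_mul (2*((2:ℝ)^q - 2))
  have h := (h3.sub h1).add h2
  have he : q - 1 - 1 = q - 2 := by ring
  rw [he] at h
  exact h.congr_deriv (by unfold W2; ring)

noncomputable def U (q t : ℝ) : ℝ := (1+t)^(q-2) + (1-t)^(q-2)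

lemma hU (q : ℝ) (hq : 3 ≤ q) (t : ℝ) :
    HasDerivAt (U q) ((q-2) * (1+t)^(q-3) - (q-2) * (1-t)^(q-3)) t := by
  have hq2 : 1 ≤ q - 2 := by linarith
  have h1 := hasDerivAt_onePlus (q-2) t hq2
  have h2 := hasDerivAt_oneMinus (q-2) t hq2
  have h := h1.add h2
  have he : q - 2 - 1 = q - 3 := by ring
  rw [he] at h
  exact h.congr_deriv (by ring)

lemma U_mono (q : ℝ) (hq : 3 ≤ q) : MonotoneOn (U q) (Icc (0:ℝ) 1) := by
  apply monotoneOn_of_hasDerivWithinAt_nonneg (convex_Icc 0 1)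
    (fun t _ => (hU q hq t).continuousAt.continuousWithinAt)
    (fun t ht => (hU q hq t).hasDerivWithinAt)
  intro t ht
  rw [interior_Icc] at ht
  obtain ⟨ht0, ht1⟩ := ht
  have hb : (1 - t) ^ (q-3) ≤ (1 + t) ^ (q-3) :=
    Real.rpow_le_rpow (by linarith) (by linarith) (by linarith)
  nlinarith [hb]

lemma W1_concave (q : ℝ) (hq : 3 ≤ q) : ConcaveOn ℝ (Icc (0:ℝ) 1) (W1 q) := by
  have hq2 : 2 ≤ q := by linarith
  apply AntitoneOn.concaveOn_of_deriv (convex_Icc 0 1)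
    (fun t _ => (hW2 q hq2 t).continuousAt.continuousWithinAt)
    (fun t _ => (hW2 q hq2 t).differentiableAt.differentiableWithinAt)
  intro a ha b hb hab
  rw [(hW2 q hq2 a).deriv, (hW2 q hq2 b).deriv]
  rw [interior_Icc] at ha hb
  have hu : U q a ≤ U q b :=
    U_mono q hq (Ioo_subset_Icc_self ha) (Ioo_subset_Icc_self hb) hab
  unfold U at hu
  unfold W2
  have hqq : (0:ℝ) ≤ q * (q-1) := by nlinarith
  nlinarith [mul_le_mul_of_nonneg_left hu hqq]

lemma W_zero (q : ℝ) : W q 0 = 0 := by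
  unfold W
  norm_num

lemma W_one (q : ℝ) (hq : 3 ≤ q) : W q 1 = 0 := by
  unfold W
  rw [show (1:ℝ) + 1 = 2 by norm_num, show (1:ℝ) - 1 = 0 by norm_num,
    Real.zero_rpow (by linarith : q ≠ 0)]
  ring

lemma W1_zero (q : ℝ) : W1 q 0 = 0 := by
  unfold W1
  norm_num

lemma W_nonneg (q : ℝ) (hq : 3 ≤ q) {t : ℝ} (ht0 : 0 ≤ t) (ht1 : t ≤ 1) :
    0 ≤ W q t := by
  have hq1 : 1 ≤ q := by linarith
  rcases eq_or_lt_of_le ht0 with rfl | htpos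
  · rw [W_zero]
  have hconc := W1_concave q hq
  have htI : t ∈ Icc (0:ℝ) 1 := ⟨ht0, ht1⟩
  have h0I : (0:ℝ) ∈ Icc (0:ℝ) 1 := by constructor <;> norm_num
  rcases le_or_gt 0 (W1 q t) with hpos | hneg
  · -- W monotone on [0, t]
    have hmono : MonotoneOn (W q) (Icc 0 t) := by
      apply monotoneOn_of_hasDerivWithinAt_nonneg (convex_Icc 0 t)
        (fun s _ => (hW1 q hq1 s).continuousAt.continuousWithinAt)
        (fun s _ => (hW1 q hq1 s).hasDerivWithinAt)
      intro s hs
      rw [interior_Icc] at hs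
      obtain ⟨hs0, hst⟩ := hs
      have ha' : (0:ℝ) ≤ 1 - s/t := by
        have : s/t ≤ 1 := by
          rw [div_le_one htpos]; linarith
        linarith
      have hb' : (0:ℝ) ≤ s/t := by positivity
      have hc := hconc.2 h0I htI ha' hb' (by ring)
      have hst' : (1 - s/t) • (0:ℝ) + (s/t) • t = s := by
        simp only [smul_eq_mul]
        field_simp
        ring
      rw [hst', W1_zero] at hc
      simp only [smul_eq_mul, mul_zero] at hc
      have : 0 ≤ (s/t) * W1 q t := by positivity
      linarith
    have h := hmono (left_mem_Icc.2 ht0) (right_mem_Icc.2 ht0) ht0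
    rwa [W_zero] at h
  · -- W antitone on [t, 1]
    have hanti : AntitoneOn (W q) (Icc t 1) := by
      apply antitoneOn_of_hasDerivWithinAt_nonpos (convex_Icc t 1)
        (fun s _ => (hW1 q hq1 s).continuousAt.continuousWithinAt)
        (fun s _ => (hW1 q hq1 s).hasDerivWithinAt)
      intro s hs
      rw [interior_Icc] at hs
      obtain ⟨hts, hs1⟩ := hs
      have hsI : s ∈ Icc (0:ℝ) 1 := ⟨by linarith, le_of_lt hs1⟩
      have hspos : 0 < s := lt_trans htpos hts
      have ha' : (0:ℝ) ≤ 1 - t/s := by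
        have : t/s ≤ 1 := by
          rw [div_le_one hspos]; linarith
        linarith
      have hb' : (0:ℝ) ≤ t/s := by positivity
      have hc := hconc.2 h0I hsI ha' hb' (by ring)
      have hts' : (1 - t/s) • (0:ℝ) + (t/s) • s = t := by
        simp only [smul_eq_mul]
        field_simp
        ring
      rw [hts', W1_zero] at hc
      simp only [smul_eq_mul, mul_zero] at hc
      -- hc : (1 - t/s)*0 + (t/s) * W1 q s ≤ W1 q t
      have hts0 : 0 < t/s := by positivity
      nlinarith [hc, hneg, hts0]
    have h := hanti (left_mem_Icc.2 ht1) (right_mem_Icc.2 ht1) ht1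
    rw [W_one q hq] at h
    linarith

/-- Core lower bound for `x ∈ [1/2, 1]`. -/
lemma lower_half (q x : ℝ) (hq : 3 ≤ q) (hx : 1/2 ≤ x) (hx1 : x ≤ 1) :
    (1 - 2*((1/2:ℝ))^q) * (4*x*(1-x)) ≤ 1 - x^q - (1-x)^q := by
  have hW := W_nonneg q hq (t := 2*x-1) (by linarith) (by linarith)
  have hP : (0:ℝ) < (2:ℝ)^q := Real.rpow_pos_of_pos (by norm_num) q
  have e1 : ((1:ℝ)+(2*x-1))^q = (2:ℝ)^q * x^q := by
    rw [show (1:ℝ)+(2*x-1) = 2*x by ring, Real.mul_rpow (by norm_num) (by linarith)]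
  have e2 : ((1:ℝ)-(2*x-1))^q = (2:ℝ)^q * (1-x)^q := by
    rw [show (1:ℝ)-(2*x-1) = 2*(1-x) by ring, Real.mul_rpow (by norm_num) (by linarith)]
  have e3 : ((1/2:ℝ))^q = ((2:ℝ)^q)⁻¹ := by
    rw [show (1/2:ℝ) = 2⁻¹ by norm_num, ← Real.rpow_neg_one (2:ℝ),
      ← Real.rpow_mul (by norm_num : (0:ℝ) ≤ 2),
      show (-1:ℝ)*q = -q by ring, Real.rpow_neg (by norm_num : (0:ℝ) ≤ 2)]
  unfold W at hW
  rw [e1, e2] at hW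
  rw [e3]
  rw [← mul_le_mul_iff_of_pos_right hP]
  have hexp : ((1:ℝ) - 2*((2:ℝ)^q)⁻¹) * (4*x*(1-x)) * (2:ℝ)^q
      = ((2:ℝ)^q - 2) * (4*x*(1-x)) := by
    field_simp
  rw [hexp]
  nlinarith [hW]

/-- Core upper bound for `x ∈ (0,1)`. -/
lemma upper_core (q x : ℝ) (hq : 3 ≤ q) (hx : 0 < x) (hx1 : x < 1) :
    1 - x^q - (1-x)^q ≤ q * (x * (1-x)) := by
  have per : ∀ z : ℝ, 0 < z → z < 1 →
      z^(3:ℕ) * (1 - z^(q-3)) ≤ (q-3) * (z^(2:ℕ) * (1-z)) := by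
    intro z hz hz1
    have hinv : Real.log z⁻¹ ≤ z⁻¹ - 1 := Real.log_le_sub_one_of_pos (by positivity)
    rw [Real.log_inv] at hinv
    have hexp : Real.log z * (q-3) + 1 ≤ z^(q-3) := by
      rw [Real.rpow_def_of_pos hz]
      linarith [Real.add_one_le_exp (Real.log z * (q-3))]
    have h1 : 1 - z^(q-3) ≤ (q-3) * (-Real.log z) := by linarith
    have A : z^(3:ℕ) * (1 - z^(q-3)) ≤ z^(3:ℕ) * ((q-3) * (-Real.log z)) :=
      mul_le_mul_of_nonneg_left h1 (by positivity)
    have B : (q-3) * (-Real.log z) ≤ (q-3) * (z⁻¹ - 1) :=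
      mul_le_mul_of_nonneg_left (by linarith) (by linarith)
    have C : z^(3:ℕ) * ((q-3) * (-Real.log z)) ≤ z^(3:ℕ) * ((q-3) * (z⁻¹ - 1)) :=
      mul_le_mul_of_nonneg_left B (by positivity)
    have D : z^(3:ℕ) * ((q-3) * (z⁻¹ - 1)) = (q-3) * (z^(2:ℕ) * (1-z)) := by
      field_simp
    linarith
  have hy : 0 < 1 - x := by linarith
  have hxq : x ^ q = x ^ (3:ℕ) * x ^ (q-3) := by
    rw [← Real.rpow_natCast x 3, ← Real.rpow_add hx]
    norm_num
  have hyq : (1-x) ^ q = (1-x) ^ (3:ℕ) * (1-x) ^ (q-3) := by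
    rw [← Real.rpow_natCast (1-x) 3, ← Real.rpow_add hy]
    norm_num
  have P1 := per x hx hx1
  have P2 := per (1-x) hy (by linarith)
  rw [hxq, hyq]
  nlinarith [P1, P2]

end TsallisAux

theorem tsallis_binary_entropy_bounds_q_ge_three (q x : ℝ) (hq : 3 ≤ q)
    (hx0 : 0 ≤ x) (hx1 : x ≤ 1) :
    2 * tsallisBin q (1 / 2) * (2 * x * (1 - x)) ≤ tsallisBin q x ∧
      tsallisBin q x ≤ (q / (2 * (q - 1))) * (2 * x * (1 - x)) := by
  have hq1 : (0:ℝ) < q - 1 := by linarith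
  constructor
  · -- lower bound
    have key : (1 - 2*((1/2:ℝ))^q) * (4*x*(1-x)) ≤ 1 - x^q - (1-x)^q := by
      rcases le_total x (1/2) with h | h
      · have h2 := TsallisAux.lower_half q (1-x) hq (by linarith) (by linarith)
        rw [show (1:ℝ) - (1-x) = x by ring] at h2
        nlinarith [h2]
      · exact TsallisAux.lower_half q x hq h hx1
    unfold tsallisBin
    rw [show (1:ℝ) - 1/2 = 1/2 by norm_num]
    have lhs_eq : 2 * ((1 - (1/2:ℝ)^q - (1/2:ℝ)^q)/(q-1)) * (2*x*(1-x))
        = ((1 - 2*(1/2:ℝ)^q) * (4*x*(1-x)))/(q-1) := by ring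
    rw [lhs_eq]
    exact div_le_div_of_nonneg_right key hq1.le
  · -- upper bound
    rcases eq_or_lt_of_le hx0 with rfl | hx0'
    · simp [tsallisBin, Real.zero_rpow (show q ≠ 0 by linarith), Real.one_rpow]
    rcases eq_or_lt_of_le hx1 with rfl | hx1'
    · simp [tsallisBin, Real.zero_rpow (show q ≠ 0 by linarith), Real.one_rpow]
    have key := TsallisAux.upper_core q x hq hx0' hx1'
    unfold tsallisBin
    have rhs_eq : (q/(2*(q-1))) * (2*x*(1-x)) = (q*(x*(1-x)))/(q-1) := by
      field_simp
    rw [rhs_eq]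
    exact div_le_div_of_nonneg_right key hq1.le
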